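/- Given two stable matchings μ₁ and μ₂, the function assigning to each man the less preferred of μ₁(m) and μ₂(m) is a well-defined stable matching (the 'meet'), and moreover in this matching every woman receives the more preferred of her two partners μ₁(w), μ₂(w). -/
import Mathlib


open Finset

/-- A stable matching instance: `n` men and `n` women; `mrank m w` is the
(0-indexed) rank of woman `w` in man `m`'s strict preference list (lower = more
preferred); `wrank w m` analogously. -/
structure SMInstance (n : ℕ) where
  mrank : Fin n → Fin n → Fin n
  wrank : Fin n → Fin n → Fin n
  mbij : ∀ m, Function.Bijective (mrank m)
  wbij : ∀ w, Function.Bijective (wrank w)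

namespace SMInstance

variable {n : ℕ}

/-- `(m, w)` is a blocking pair of the perfect matching `μ`. -/
def Blocking (I : SMInstance n) (μ : Equiv.Perm (Fin n)) (m w : Fin n) : Prop :=
  μ m ≠ w ∧ I.mrank m w < I.mrank m (μ m) ∧ I.wrank w m < I.wrank w (μ.symm w)

/-- A matching is stable if it admits no blocking pair. -/
def Stable (I : SMInstance n) (μ : Equiv.Perm (Fin n)) : Prop :=
  ∀ m w, ¬ I.Blocking μ m w

/-- Total (1-indexed) rank of partners over men. -/
def SM (I : SMInstance n) (μ : Equiv.Perm (Fin n)) : ℤ :=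
  ∑ m : Fin n, (((I.mrank m (μ m) : ℕ) : ℤ) + 1)

/-- Total (1-indexed) rank of partners over women. -/
def SW (I : SMInstance n) (μ : Equiv.Perm (Fin n)) : ℤ :=
  ∑ w : Fin n, (((I.wrank w (μ.symm w) : ℕ) : ℤ) + 1)

/-- The sex-equality cost of a matching. -/
def cost (I : SMInstance n) (μ : Equiv.Perm (Fin n)) : ℤ :=
  |I.SM μ - I.SW μ|

end SMInstance

/-- given two stable matchings `μ₁`, `μ₂`, assigning each man the
less preferred of `μ₁ m`, `μ₂ m` is a well-defined perfect matching, it is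
stable (the meet), and in it every woman receives the more preferred of her two
partners `μ₁.symm w`, `μ₂.symm w`. -/
lemma pointer {n : ℕ} (I : SMInstance n) (μ μ' : Equiv.Perm (Fin n))
    (hμ' : I.Stable μ') (m : Fin n)
    (h : I.mrank m (μ m) < I.mrank m (μ' m)) :
    I.wrank (μ m) (μ'.symm (μ m)) < I.wrank (μ m) m := by
  set w := μ m with hw
  have hne : μ' m ≠ w := by
    intro he
    rw [he] at h
    exact lt_irrefl _ h
  have hms : μ'.symm w ≠ m := by
    intro he
    apply hne
    rw [← he, Equiv.apply_symm_apply]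
  rcases lt_or_ge (I.wrank w (μ'.symm w)) (I.wrank w m) with hlt | hle
  · exact hlt
  · exfalso
    apply hμ' m w
    refine ⟨hne, h, ?_⟩
    rcases hle.lt_or_eq with hlt | heq
    · exact hlt
    · exact absurd ((I.wbij w).injective heq).symm hms

theorem meet_is_stable {n : ℕ} (I : SMInstance n)
    (μ₁ μ₂ : Equiv.Perm (Fin n)) (h₁ : I.Stable μ₁) (h₂ : I.Stable μ₂) :
    ∃ τ : Equiv.Perm (Fin n),
      (∀ m, τ m = if I.mrank m (μ₁ m) ≤ I.mrank m (μ₂ m) then μ₂ m else μ₁ m) ∧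
      I.Stable τ ∧
      ∀ w, τ.symm w =
        if I.wrank w (μ₁.symm w) ≤ I.wrank w (μ₂.symm w) then μ₁.symm w
        else μ₂.symm w := by
  classical
  set f : Fin n → Fin n :=
    fun m => if I.mrank m (μ₁ m) ≤ I.mrank m (μ₂ m) then μ₂ m else μ₁ m with hf
  set β : Fin n → Fin n :=
    fun w => if I.wrank w (μ₁.symm w) ≤ I.wrank w (μ₂.symm w) then μ₁.symm w
      else μ₂.symm w with hβ
  -- key: f (β w) = w for every woman w
  have key : ∀ w, f (β w) = w := by
    intro w
    by_cases hw : I.wrank w (μ₁.symm w) ≤ I.wrank w (μ₂.symm w)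
    · -- β w = μ₁.symm w =: m, with μ₁ m = w
      have hβw : β w = μ₁.symm w := by simp [hβ, hw]
      set m := μ₁.symm w with hm
      have hμ₁m : μ₁ m = w := Equiv.apply_symm_apply _ _
      by_cases heq : μ₁ m = μ₂ m
      · simp only [hβw, hf, ← hm]
        split <;> [rw [← heq, hμ₁m]; exact hμ₁m]
      · have hlt : ¬ I.mrank m (μ₁ m) ≤ I.mrank m (μ₂ m) := by
          intro hle
          have hstrict : I.mrank m (μ₁ m) < I.mrank m (μ₂ m) := by
            rcases hle.lt_or_eq with h | h
            · exact h
            · exact absurd ((I.mbij m).injective h) heq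
          have := pointer I μ₁ μ₂ h₂ m hstrict
          rw [hμ₁m] at this
          have hms : μ₂.symm w ≠ m := by
            intro he
            apply heq
            rw [hμ₁m, ← he, Equiv.apply_symm_apply]
          exact absurd hw (not_le.mpr this)
        simp only [hβw, hf, ← hm]
        rw [if_neg hlt, hμ₁m]
    · -- β w = μ₂.symm w =: m, with μ₂ m = w
      have hβw : β w = μ₂.symm w := by simp [hβ, hw]
      set m := μ₂.symm w with hm
      have hμ₂m : μ₂ m = w := Equiv.apply_symm_apply _ _
      have hle2 : I.mrank m (μ₁ m) ≤ I.mrank m (μ₂ m) := by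
        by_contra hle
        have hstrict : I.mrank m (μ₂ m) < I.mrank m (μ₁ m) := not_le.mp hle
        have := pointer I μ₂ μ₁ h₁ m hstrict
        rw [hμ₂m] at this
        exact hw this.le
      simp only [hβw, hf, ← hm]
      rw [if_pos hle2, hμ₂m]
  have hsurj : Function.Surjective f := fun w => ⟨β w, key w⟩
  have hbij : Function.Bijective f := Finite.surjective_iff_bijective.mp hsurj
  refine ⟨Equiv.ofBijective f hbij, fun m => rfl, ?_, ?_⟩
  · -- stability
    intro m w hb
    obtain ⟨hne, hm, hw⟩ := hb
    have hτm : (Equiv.ofBijective f hbij) m = f m := rfl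
    have hτs : (Equiv.ofBijective f hbij).symm w = β w := by
      rw [Equiv.symm_apply_eq]
      exact (key w).symm
    rw [hτm] at hne hm
    rw [hτs] at hw
    by_cases hc : I.mrank m (μ₁ m) ≤ I.mrank m (μ₂ m)
    · -- f m = μ₂ m; (m, w) blocks μ₂
      have hfm : f m = μ₂ m := if_pos hc
      rw [hfm] at hne hm
      apply h₂ m w
      refine ⟨hne, hm, ?_⟩
      by_cases hwc : I.wrank w (μ₁.symm w) ≤ I.wrank w (μ₂.symm w)
      · have : β w = μ₁.symm w := if_pos hwc
        rw [this] at hw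
        exact lt_of_lt_of_le hw hwc
      · have : β w = μ₂.symm w := if_neg hwc
        rw [this] at hw
        exact hw
    · -- f m = μ₁ m; (m, w) blocks μ₁
      have hfm : f m = μ₁ m := if_neg hc
      rw [hfm] at hne hm
      apply h₁ m w
      refine ⟨hne, hm, ?_⟩
      by_cases hwc : I.wrank w (μ₁.symm w) ≤ I.wrank w (μ₂.symm w)
      · have : β w = μ₁.symm w := if_pos hwc
        rw [this] at hw
        exact hw
      · have : β w = μ₂.symm w := if_neg hwc
        rw [this] at hw
        exact lt_of_lt_of_le hw (not_le.mp hwc).le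
  · -- symm characterization
    intro w
    rw [Equiv.symm_apply_eq]
    exact (key w).symm
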